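/- Let X be a Tychonoff space, Y an extension of X with compact remainder, ζY a compactification of Y, and φ : βX → ζY the continuous extension of id_X. Then Y is pseudocompact if and only if cl_{βX}(βX \ υX) ⊆ φ^{-1}[Y \ X]. -/

import Mathlib

open Set Topology Filter

def IsPseudocompactSpace (Y : Type) [TopologicalSpace Y] : Prop :=
  ∀ f : Y → ℝ, Continuous f → ∃ M : ℝ, ∀ y : Y, |f y| ≤ M

def hewitt (X : Type) [TopologicalSpace X] : Set (StoneCech X) :=
  ⋂₀ {C : Set (StoneCech X) |
      (∃ f : StoneCech X → ℝ, Continuous f ∧ C = {x | f x ≠ 0}) ∧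
        Set.range (stoneCechUnit : X → StoneCech X) ⊆ C}

/-- let `Y` be an extension of `X` with compact remainder, `ζY` (here `Z`)
a compactification of `Y`, and `φ : βX → ζY` the continuous extension of `id_X`. Then
`Y` is pseudocompact iff `cl_{βX}(βX \ υX) ⊆ φ⁻¹[Y \ X]`. -/
theorem stmt19 (X Y Z : Type) [TopologicalSpace X] [T35Space X]
    [TopologicalSpace Y] [T35Space Y]
    [TopologicalSpace Z] [CompactSpace Z] [T2Space Z]
    (e : X → Y) (he : Topology.IsEmbedding e) (hd : DenseRange e)
    (hrem : IsCompact (Set.range e)ᶜ)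
    (j : Y → Z) (hj : Topology.IsEmbedding j) (hjd : DenseRange j)
    (φ : StoneCech X → Z) (hφ : Continuous φ) (hext : φ ∘ stoneCechUnit = j ∘ e) :
    IsPseudocompactSpace Y ↔
      closure ((hewitt X)ᶜ) ⊆ φ ⁻¹' (j '' (Set.range e)ᶜ) := by
  classical
  have hextx : ∀ x : X, φ (stoneCechUnit x) = j (e x) := fun x => congrFun hext x
  have hXopen : IsOpen (Set.range e) := isClosed_compl_iff.mp hrem.isClosed
  constructor
  · -- forward direction
    intro hY
    have hK : IsCompact (j '' (Set.range e)ᶜ) := hrem.image hj.continuous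
    have hKc : IsClosed (j '' (Set.range e)ᶜ) := hK.isClosed
    apply closure_minimal _ (hKc.preimage hφ)
    intro p hp
    simp only [Set.mem_compl_iff, hewitt, Set.mem_sInter, Set.mem_setOf_eq] at hp
    push_neg at hp
    obtain ⟨C, ⟨⟨f₀, hf₀c, rfl⟩, hCX⟩, hpC⟩ := hp
    have hf₀p : f₀ p = 0 := by simpa using hpC
    set f : StoneCech X → ℝ := fun q => (f₀ q) ^ 2 with hfdef
    have hfc : Continuous f := hf₀c.pow 2
    have hfp : f p = 0 := by simp [hfdef, hf₀p]
    have hfnn : ∀ q, 0 ≤ f q := fun q => sq_nonneg _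
    have hfx : ∀ x : X, 0 < f (stoneCechUnit x) := by
      intro x
      have h0 : f₀ (stoneCechUnit x) ≠ 0 := hCX ⟨x, rfl⟩
      positivity
    by_contra hφp
    obtain ⟨u, hu0, hu1, hu01⟩ := exists_continuous_zero_one_of_isClosed
      (isClosed_singleton (x := φ p)) hKc (Set.disjoint_singleton_left.mpr hφp)
    have huφp : u (φ p) = 0 := hu0 rfl
    have hunn : ∀ z, 0 ≤ u z := fun z => (hu01 z).1
    have hule : ∀ z, u z ≤ 1 := fun z => (hu01 z).2
    set F : Y → ℝ := fun y => if h : ∃ x, e x = y then f (stoneCechUnit h.choose) else 0 with hF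
    have hFe : ∀ x : X, F (e x) = f (stoneCechUnit x) := by
      intro x
      have hex : ∃ x', e x' = e x := ⟨x, rfl⟩
      have hch : hex.choose = x := he.injective hex.choose_spec
      simp only [hF, dif_pos hex, hch]
    have hFnn : ∀ y, 0 ≤ F y := by
      intro y
      by_cases h : ∃ x, e x = y
      · simp only [hF, dif_pos h]; exact hfnn _
      · simp only [hF, dif_neg h]; exact le_refl 0
    set g : Y → ℝ := fun y => (1 - u (j y)) / (F y + u (j y)) with hg
    have hujc : Continuous fun y => u (j y) := u.continuous.comp hj.continuous
    -- continuity of g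
    have hgc : Continuous g := by
      rw [continuous_iff_continuousAt]
      intro y₀
      by_cases hy₀ : y₀ ∈ Set.range e
      · -- on the open set range e, F is continuous and the denominator is positive
        obtain ⟨x₀, rfl⟩ := hy₀
        have hoe : IsOpenEmbedding e := ⟨he, hXopen⟩
        have hFcx : ContinuousAt F (e x₀) := by
          rw [← hoe.continuousAt_iff]
          have : F ∘ e = fun x => f (stoneCechUnit x) := funext hFe
          rw [this]
          exact (hfc.comp continuous_stoneCechUnit).continuousAt
        have hden : F (e x₀) + u (j (e x₀)) ≠ 0 := by
          have := hfx x₀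
          have := hunn (j (e x₀))
          rw [hFe x₀]
          linarith
        exact ((continuous_const.sub hujc).continuousAt).div
          (hFcx.add hujc.continuousAt) hden
      · -- at points of the remainder, squeeze to 0
        have hu1y : u (j y₀) = 1 := hu1 ⟨y₀, hy₀, rfl⟩
        have hgy₀ : g y₀ = 0 := by simp [hg, hu1y]
        rw [ContinuousAt, hgy₀]
        have hV : ∀ᶠ y in 𝓝 y₀, (1 : ℝ) / 2 < u (j y) := by
          have : Tendsto (fun y => u (j y)) (𝓝 y₀) (𝓝 (u (j y₀))) := hujc.continuousAt
          rw [hu1y] at this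
          exact this.eventually (eventually_gt_nhds (by norm_num))
        have hbound : ∀ᶠ y in 𝓝 y₀, g y ≤ 2 * (1 - u (j y)) := by
          filter_upwards [hV] with y hy
          have hden : (1 : ℝ) / 2 ≤ F y + u (j y) := by
            have := hFnn y; linarith
          have hnum : 0 ≤ 1 - u (j y) := by have := hule (j y); linarith
          calc g y = (1 - u (j y)) / (F y + u (j y)) := rfl
            _ ≤ (1 - u (j y)) / (1 / 2) :=
                div_le_div_of_nonneg_left hnum (by norm_num) hden
            _ = 2 * (1 - u (j y)) := by ring
        have hnng : ∀ᶠ y in 𝓝 y₀, 0 ≤ g y := by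
          filter_upwards [hV] with y hy
          have hnum : 0 ≤ 1 - u (j y) := by have := hule (j y); linarith
          have hden : 0 ≤ F y + u (j y) := by have := hFnn y; linarith
          exact div_nonneg hnum hden
        have htend : Tendsto (fun y => 2 * (1 - u (j y))) (𝓝 y₀) (𝓝 0) := by
          have : Tendsto (fun y => 2 * (1 - u (j y))) (𝓝 y₀) (𝓝 (2 * (1 - u (j y₀)))) :=
            (continuous_const.mul (continuous_const.sub hujc)).continuousAt
          rwa [hu1y, show (2 : ℝ) * (1 - 1) = 0 by ring] at this
        exact squeeze_zero' hnng hbound htend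
    -- g is unbounded, contradiction with pseudocompactness
    obtain ⟨M, hM⟩ := hY g hgc
    set ε : ℝ := min (1 / 2) (1 / (4 * (|M| + 1))) with hε
    have hεpos : 0 < ε := by
      apply lt_min (by norm_num)
      have : 0 < |M| + 1 := by positivity
      positivity
    have hεhalf : ε ≤ 1 / 2 := min_le_left _ _
    have hεM : ε ≤ 1 / (4 * (|M| + 1)) := min_le_right _ _
    have hU : IsOpen ({q | f q < ε} ∩ φ ⁻¹' (u ⁻¹' Set.Iio ε)) :=
      (isOpen_lt hfc continuous_const).inter
        ((u.continuous.isOpen_preimage _ isOpen_Iio).preimage hφ)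
    have hpU : p ∈ {q | f q < ε} ∩ φ ⁻¹' (u ⁻¹' Set.Iio ε) := by
      constructor
      · simp only [Set.mem_setOf_eq, hfp]; exact hεpos
      · simp only [Set.mem_preimage, Set.mem_Iio, huφp]; exact hεpos
    obtain ⟨x, hx⟩ := denseRange_stoneCechUnit.exists_mem_open hU ⟨p, hpU⟩
    have hfxε : f (stoneCechUnit x) < ε := hx.1
    have huxε : u (j (e x)) < ε := by
      have := hx.2
      rwa [Set.mem_preimage, Set.mem_preimage, Set.mem_Iio, hextx x] at this
    -- compute a lower bound for g (e x)
    have hden : 0 < F (e x) + u (j (e x)) := by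
      have := hfx x; have := hunn (j (e x)); rw [hFe x]; linarith
    have hgex : M < g (e x) := by
      rw [hg]
      simp only
      rw [lt_div_iff₀ hden, hFe x]
      have h1 : 0 ≤ u (j (e x)) := hunn _
      have h2 : 0 ≤ f (stoneCechUnit x) := hfnn _
      have h3 : M ≤ |M| := le_abs_self M
      have h4 : 0 < 4 * (|M| + 1) := by positivity
      have h5 : ε * (4 * (|M| + 1)) ≤ 1 := by
        rw [← le_div_iff₀ h4] at *
        exact hεM
      have h6 : 0 ≤ |M| := abs_nonneg M
      nlinarith [mul_le_mul_of_nonneg_left hfxε.le h6,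
        mul_le_mul_of_nonneg_left huxε.le h6]
    have := hM (e x)
    have : g (e x) ≤ M := le_trans (le_abs_self _) this
    linarith
  · -- backward direction
    intro hsub
    cases isEmpty_or_nonempty Y with
    | inl hYe => exact fun g hg => ⟨0, fun y => (hYe.false y).elim⟩
    | inr hYne =>
      have hXne : Nonempty X := by
        obtain ⟨y⟩ := hYne
        obtain ⟨x, -⟩ := hd.exists_mem_open isOpen_univ ⟨y, trivial⟩
        exact ⟨x⟩
      intro g hg
      by_contra hcon
      push_neg at hcon
      set h : Y → ℝ := fun y => (1 + |g y|)⁻¹ with hh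
      have hpos : ∀ y, 0 < h y := by
        intro y
        have : 0 < 1 + |g y| := by positivity
        positivity
      have hle1 : ∀ y, h y ≤ 1 := by
        intro y
        rw [hh]
        simp only
        rw [inv_le_one_iff₀]
        right
        have := abs_nonneg (g y); linarith
      have hhc : Continuous h := by
        apply Continuous.inv₀ (continuous_const.add hg.abs)
        intro y
        have := abs_nonneg (g y); intro hc; rw [hh] at *; simp only [Pi.add_apply] at hc; linarith [hc]
      -- small values of h are attained on X
      have hsmall : ∀ δ : ℝ, 0 < δ → ∃ x : X, h (e x) < δ := by
        intro δ hδ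
        obtain ⟨y, hy⟩ := hcon (1 / δ - 1)
        have hyδ : h y < δ := by
          have h1 : δ⁻¹ < 1 + |g y| := by
            rw [inv_eq_one_div]; linarith
          have h2 : (1 + |g y|)⁻¹ < (δ⁻¹)⁻¹ :=
            inv_strictAnti₀ (by positivity) h1
          rwa [inv_inv] at h2
        obtain ⟨x, hx⟩ := hd.exists_mem_open (isOpen_lt hhc continuous_const) ⟨y, hyδ⟩
        exact ⟨x, hx⟩
      -- extend h ∘ e to βX via Icc 0 1
      set h' : X → Set.Icc (0 : ℝ) 1 := fun x => ⟨h (e x), (hpos (e x)).le, hle1 (e x)⟩ with hh'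
      have hh'c : Continuous h' := Continuous.subtype_mk (hhc.comp he.continuous) _
      set H : StoneCech X → ℝ := fun q => (stoneCechExtend hh'c q).1 with hH
      have hHc : Continuous H := continuous_subtype_val.comp (continuous_stoneCechExtend hh'c)
      have hHx : ∀ x : X, H (stoneCechUnit x) = h (e x) := by
        intro x
        have hx := congrFun (stoneCechExtend_extends hh'c) x
        simp only [Function.comp_apply] at hx
        simp only [hH, hx, hh']
      have hHnn : ∀ q, 0 ≤ H q := fun q => (stoneCechExtend hh'c q).2.1
      obtain ⟨p, -, hpmin⟩ := isCompact_univ.exists_isMinOn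
        ⟨stoneCechUnit (Classical.arbitrary X), trivial⟩ hHc.continuousOn
      rw [isMinOn_iff] at hpmin
      have hHp : H p = 0 := by
        refine le_antisymm ?_ (hHnn p)
        by_contra hcp
        push_neg at hcp
        obtain ⟨x, hx⟩ := hsmall (H p) hcp
        have := hpmin (stoneCechUnit x) trivial
        rw [hHx] at this
        linarith
      have hpne : p ∈ (hewitt X)ᶜ := by
        intro hp
        have hmem : {q : StoneCech X | H q ≠ 0} ∈
            {C : Set (StoneCech X) |
              (∃ f : StoneCech X → ℝ, Continuous f ∧ C = {x | f x ≠ 0}) ∧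
                Set.range (stoneCechUnit : X → StoneCech X) ⊆ C} := by
          refine ⟨⟨H, hHc, rfl⟩, ?_⟩
          rintro _ ⟨x, rfl⟩
          simp only [Set.mem_setOf_eq, hHx]
          exact (hpos (e x)).ne'
        exact (hp _ hmem) hHp
      obtain ⟨y₀, hy₀, hjy₀⟩ := hsub (subset_closure hpne)
      set c := h y₀ with hcdef
      have hcpos : 0 < c := hpos y₀
      obtain ⟨W, hWopen, hWpre⟩ := hj.isInducing.isOpen_iff.mp
        (isOpen_lt continuous_const hhc : IsOpen {y | c / 2 < h y})
      have hUopen : IsOpen ({q | H q < c / 2} ∩ φ ⁻¹' W) :=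
        (isOpen_lt hHc continuous_const).inter (hWopen.preimage hφ)
      have hpU : p ∈ {q | H q < c / 2} ∩ φ ⁻¹' W := by
        constructor
        · simp only [Set.mem_setOf_eq, hHp]
          linarith
        · show φ p ∈ W
          rw [← hjy₀]
          have : y₀ ∈ j ⁻¹' W := by
            rw [hWpre]
            simp only [Set.mem_setOf_eq]
            linarith
          exact this
      obtain ⟨x, hx⟩ := denseRange_stoneCechUnit.exists_mem_open hUopen ⟨p, hpU⟩
      have h1 : h (e x) < c / 2 := by rw [← hHx]; exact hx.1
      have h2 : c / 2 < h (e x) := by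
        have hw : φ (stoneCechUnit x) ∈ W := hx.2
        rw [hextx x] at hw
        have : e x ∈ j ⁻¹' W := hw
        rw [hWpre] at this
        exact this
      linarith
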